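/- Let L be a first-order language, U a unary predicate symbol not in L, L(U) = L ∪ {U}, and let T_U be an L(U)-theory with a model M that is κ-saturated for some κ > |L(U)| + ℵ₀. Let (a_i)_{i∈ω} be an indiscernible sequence of elements of M such that there are i₀ < i in ω with a_i ∈ dcl_L(U(M) ∪ {a_0,…,a_{i₀}}). Then there exist m ∈ ℕ, a function f : M^m → M whose graph is definable in M with parameters among a_0,…,a_{i₀}, and an indiscernible sequence (g⃗_i)_{i>i₀} of m-tuples such that for every i > i₀ we have g⃗_i ∈ U(M)^m and f(g⃗_i) = a_i. -/

import Mathlib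

open FirstOrder FirstOrder.Language FirstOrder.Language.Structure Cardinal Set

namespace PaperDep

/-- The language with a single unary relation symbol `U`. -/
def unaryRelLang : FirstOrder.Language.{0, 0} :=
  ⟨fun _ => Empty, fun n => match n with | 1 => PUnit | _ => Empty⟩

/-- Interpreting the unary relation symbol `U` as membership in `B`. -/
def unaryRelStructure (M : Type*) (B : Set M) : unaryRelLang.Structure M where
  funMap := fun {_} f _ => Empty.elim f
  RelMap := fun {n} r x =>
    match n, r with
    | 1, _ => x 0 ∈ B
    | 0, r => Empty.elim r
    | (_ + 2), r => Empty.elim r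

/-- The language with a single unary function symbol `𝔣`. -/
def unaryFunLang : FirstOrder.Language.{0, 0} :=
  ⟨fun n => match n with | 1 => PUnit | _ => Empty, fun _ => Empty⟩

/-- Interpreting the unary function symbol `𝔣` as the function `F`. -/
def unaryFunStructure (M : Type*) (F : M → M) : unaryFunLang.Structure M where
  funMap := fun {n} f x =>
    match n, f with
    | 1, _ => F (x 0)
    | 0, f => Empty.elim f
    | (_ + 2), f => Empty.elim f
  RelMap := fun {_} r _ => Empty.elim r

/-- The language `L(U)`. -/
def LU (L : FirstOrder.Language.{0, 0}) : FirstOrder.Language.{0, 0} := L.sum unaryRelLang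

/-- The `L(U)`-structure on `M` given by an `L`-structure together with the
interpretation `B` of the predicate `U`. -/
def LUStructure (L : FirstOrder.Language.{0, 0}) (M : Type*) [L.Structure M] (B : Set M) :
    (LU L).Structure M :=
  letI := unaryRelStructure M B
  Language.sumStructure L unaryRelLang M

/-- The language `L(𝔣)`. -/
def LF (L : FirstOrder.Language.{0, 0}) : FirstOrder.Language.{0, 0} := L.sum unaryFunLang

/-- The `L(𝔣)`-structure on `M` given by an `L`-structure together with the
interpretation `F` of the function symbol `𝔣`. -/
def LFStructure (L : FirstOrder.Language.{0, 0}) (M : Type*) [L.Structure M] (F : M → M) :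
    (LF L).Structure M :=
  letI := unaryFunStructure M F
  Language.sumStructure L unaryFunLang M

/-- `(a⃗ᵢ)_{i ∈ ω}` is an indiscernible sequence of `p`-tuples from `M`. -/
def IsIndiscernible (L : FirstOrder.Language) {M : Type*} [L.Structure M] {p : ℕ}
    (a : ℕ → Fin p → M) : Prop :=
  ∀ (k : ℕ) (φ : L.Formula (Fin k × Fin p)) (i j : Fin k → ℕ),
    StrictMono i → StrictMono j →
      (φ.Realize (fun v => a (i v.1) v.2) ↔ φ.Realize (fun v => a (j v.1) v.2))

/-- `(a⃗ᵢ)_{i ∈ ω}` is an indiscernible sequence of `p`-tuples over the tuple `b⃗`. -/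
def IsIndiscernibleOver (L : FirstOrder.Language) {M : Type*} [L.Structure M] {p q : ℕ}
    (a : ℕ → Fin p → M) (b : Fin q → M) : Prop :=
  ∀ (k : ℕ) (φ : L.Formula ((Fin k × Fin p) ⊕ Fin q)) (i j : Fin k → ℕ),
    StrictMono i → StrictMono j →
      (φ.Realize (Sum.elim (fun v => a (i v.1) v.2) b) ↔
        φ.Realize (Sum.elim (fun v => a (j v.1) v.2) b))

/-- A theory is dependent (NIP) if in every model, every formula `φ(x⃗,y⃗)`, every
indiscernible sequence `(a⃗ᵢ)` and parameter tuple `b⃗` yield a finite or cofinite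
set `{i : φ(a⃗ᵢ, b⃗)}`. -/
def Dependent {L : FirstOrder.Language.{0, 0}} (T : L.Theory) : Prop :=
  ∀ (M : Type) [L.Structure M], T.Model M →
    ∀ (p q : ℕ) (φ : L.Formula (Fin p ⊕ Fin q)) (a : ℕ → Fin p → M) (b : Fin q → M),
      IsIndiscernible L a →
        ({i : ℕ | φ.Realize (Sum.elim (a i) b)}.Finite ∨
          {i : ℕ | ¬ φ.Realize (Sum.elim (a i) b)}.Finite)

/-- `M` is `κ`-saturated: every finitely satisfiable set of formulas with parameters from
a subset of `M` of size `< κ` and with fewer than `κ` free variables is realized in `M`. -/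
def IsSaturated (L : FirstOrder.Language.{0, 0}) (M : Type) [L.Structure M]
    (κ : Cardinal.{0}) : Prop :=
  ∀ (α : Type), #α < κ → ∀ A : Set M, #A < κ →
    ∀ S : Set (L.Formula (α ⊕ A)),
      (∀ s : Finset (L.Formula (α ⊕ A)), ↑s ⊆ S →
        ∃ v : α → M, ∀ φ ∈ s, φ.Realize (Sum.elim v (Subtype.val : A → M))) →
      ∃ v : α → M, ∀ φ ∈ S, φ.Realize (Sum.elim v (Subtype.val : A → M))

/-- The definable closure of `X` in `M` (with respect to the language `L`):
the set of elements that are the unique realization of some `L`-formula with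
parameters from `X`. -/
def dclIn (L : FirstOrder.Language) (M : Type*) [L.Structure M] (X : Set M) : Set M :=
  {a | ∃ φ : L.Formula (X ⊕ Fin 1),
    φ.Realize (Sum.elim (Subtype.val : X → M) fun _ => a) ∧
      ∀ b : M, φ.Realize (Sum.elim (Subtype.val : X → M) fun _ => b) → b = a}

end PaperDep
namespace PaperDep

/-- A set is "interval-like" if it is an open interval, possibly with infinite endpoints. -/
def IsIntervalLike {M : Type*} [LinearOrder M] (u : Set M) : Prop :=
  (∃ a b : M, u = Set.Ioo a b) ∨ (∃ a : M, u = Set.Iio a) ∨ (∃ a : M, u = Set.Ioi a) ∨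
    u = Set.univ

/-- `s` is a finite union of points and open intervals. -/
def FinUnionPtsIntervals {M : Type*} [LinearOrder M] (s : Set M) : Prop :=
  ∃ (n : ℕ) (f : Fin n → Set M),
    (∀ i, (∃ a : M, f i = {a}) ∨ IsIntervalLike (f i)) ∧ s = ⋃ i, f i

/-- `s` is a finite union of open intervals. -/
def FinUnionIntervals {M : Type*} [LinearOrder M] (s : Set M) : Prop :=
  ∃ (n : ℕ) (f : Fin n → Set M), (∀ i, IsIntervalLike (f i)) ∧ s = ⋃ i, f i

/-- `s` is open in the order topology. -/
def OrderOpen {M : Type*} [LinearOrder M] (s : Set M) : Prop :=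
  ∀ x ∈ s, ∃ u : Set M, IsIntervalLike u ∧ x ∈ u ∧ u ⊆ s

/-- The distinguished order symbol of `L` is interpreted as the order of `M`. -/
def OrdCompat (L : FirstOrder.Language) [L.IsOrdered] (M : Type*) [L.Structure M] [LE M] :
    Prop :=
  ∀ x y : M, Structure.RelMap (leSymb : L.Relations 2) ![x, y] ↔ x ≤ y

/-- The linearly ordered `L`-structure `M` is o-minimal: every subset of `M` definable with
parameters is a finite union of points and open intervals. -/
def OMinimalStructure (L : FirstOrder.Language) (M : Type*) [L.Structure M] [LinearOrder M] :
    Prop :=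
  ∀ s : Set M, (Set.univ : Set M).Definable₁ L s → FinUnionPtsIntervals s

/-- The theory `T` (in an ordered language) is o-minimal: every model (with its linear order,
compatible with the order symbol of `L`) is o-minimal. -/
def OMinimalTheory (L : FirstOrder.Language.{0, 0}) [L.IsOrdered] (T : L.Theory) : Prop :=
  ∀ (M : Type) [L.Structure M] [LinearOrder M], OrdCompat L M → T.Model M →
    OMinimalStructure L M

/-- The theory `T` has quantifier elimination. -/
def HasQE {L : FirstOrder.Language} (T : L.Theory) : Prop :=
  ∀ (n : ℕ) (φ : L.Formula (Fin n)),
    ∃ ψ : L.Formula (Fin n), ψ.IsQF ∧ (φ ⇔[T] ψ)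

/-- The theory `T` has a universal axiomatization. -/
def HasUnivAx {L : FirstOrder.Language.{0, 0}} (T : L.Theory) : Prop :=
  ∃ T₀ : L.Theory, T₀.IsUniversal ∧ ∀ (M : Type) [L.Structure M], T.Model M ↔ T₀.Model M

/-- `L`-terms naming the operations of an (ordered) abelian group with a distinguished
element `1`. -/
structure AbGroupOps (L : FirstOrder.Language) where
  add : L.Term (Fin 2)
  neg : L.Term (Fin 1)
  zero : L.Term (Fin 0)
  one : L.Term (Fin 0)

/-- The terms of `ops` are interpreted in `M` as the group operations, and `1` is positive. -/
def AbGroupOps.Compat {L : FirstOrder.Language} (ops : AbGroupOps L) (M : Type*)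
    [L.Structure M] [AddCommGroup M] [LinearOrder M] [IsOrderedAddMonoid M] : Prop :=
  (∀ x y : M, ops.add.realize ![x, y] = x + y) ∧
    (∀ x : M, ops.neg.realize ![x] = -x) ∧
    ops.zero.realize (fun i : Fin 0 => i.elim0 : Fin 0 → M) = 0 ∧
    0 < ops.one.realize (fun i : Fin 0 => i.elim0 : Fin 0 → M)

/-- `L`-terms naming the operations of an ordered ring. -/
structure RingOps (L : FirstOrder.Language) where
  add : L.Term (Fin 2)
  mul : L.Term (Fin 2)
  neg : L.Term (Fin 1)
  zero : L.Term (Fin 0)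
  one : L.Term (Fin 0)

/-- The terms of `ops` are interpreted in `M` as the ring operations. -/
def RingOps.Compat {L : FirstOrder.Language} (ops : RingOps L) (M : Type*)
    [L.Structure M] [Field M] [LinearOrder M] [IsStrictOrderedRing M] : Prop :=
  (∀ x y : M, ops.add.realize ![x, y] = x + y) ∧
    (∀ x y : M, ops.mul.realize ![x, y] = x * y) ∧
    (∀ x : M, ops.neg.realize ![x] = -x) ∧
    ops.zero.realize (fun i : Fin 0 => i.elim0 : Fin 0 → M) = 0 ∧
    ops.one.realize (fun i : Fin 0 => i.elim0 : Fin 0 → M) = 1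

/-- An ordered field is real closed: nonnegative elements are squares and odd-degree
polynomials have roots. -/
def RealClosed (M : Type*) [Field M] [LinearOrder M] [IsStrictOrderedRing M] : Prop :=
  (∀ x : M, 0 ≤ x → ∃ y : M, y ^ 2 = x) ∧
    ∀ p : Polynomial M, Odd p.natDegree → ∃ x : M, p.eval x = 0

/-- `T` extends the theory of real closed ordered fields: in every model, the distinguished
symbols define the structure of a real closed ordered field. -/
def ExtendsRCF (L : FirstOrder.Language.{0, 0}) [L.IsOrdered] (ops : RingOps L)
    (T : L.Theory) : Prop :=
  ∀ (M : Type) [L.Structure M], T.Model M → Nonempty M →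
    ∃ (fld : Field M) (ord : LinearOrder M) (_ : IsStrictOrderedRing M),
      OrdCompat L M ∧ ops.Compat M ∧ RealClosed M

/-- `T` extends the theory of ordered abelian groups with a distinguished positive
element `1`. -/
def ExtendsOAG (L : FirstOrder.Language.{0, 0}) [L.IsOrdered] (ops : AbGroupOps L)
    (T : L.Theory) : Prop :=
  ∀ (M : Type) [L.Structure M], T.Model M → Nonempty M →
    ∃ (grp : AddCommGroup M) (ord : LinearOrder M) (_ : IsOrderedAddMonoid M),
      OrdCompat L M ∧ ops.Compat M

/-- `V` is a `T`-convex subring of the elementary substructure of `D` with underlying set `S`: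
a convex subring closed under all continuous `L`-∅-definable unary functions. -/
def IsTConvexSubring (L : FirstOrder.Language) {D : Type*} [L.Structure D]
    [Field D] [LinearOrder D] [IsStrictOrderedRing D] (S V : Set D) : Prop :=
  V ⊆ S ∧ (0 : D) ∈ V ∧ (1 : D) ∈ V ∧
    (∀ x ∈ V, ∀ y ∈ V, x + y ∈ V) ∧ (∀ x ∈ V, ∀ y ∈ V, x * y ∈ V) ∧ (∀ x ∈ V, -x ∈ V) ∧
    (∀ x ∈ V, ∀ z ∈ V, ∀ y ∈ S, x ≤ y → y ≤ z → y ∈ V) ∧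
    ∀ F : D → D,
      (∃ φ : L.Formula (Fin 2), ∀ x y : D, F x = y ↔ φ.Realize ![x, y]) →
      (∀ x ∈ S, F x ∈ S) →
      (∀ x ∈ S, ∀ ε ∈ S, 0 < ε → ∃ δ ∈ S, 0 < δ ∧ ∀ y ∈ S, |y - x| < δ → |F y - F x| < ε) →
      ∀ x ∈ V, F x ∈ V

/-- The maximal ideal (set of nonunits) of the convex subring `V`. -/
def maxIdealIn {D : Type*} [Field D] [LinearOrder D] [IsStrictOrderedRing D] (V : Set D) : Set D :=
  {x ∈ V | x = 0 ∨ x⁻¹ ∉ V}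

open Classical in
/-- Rational powers in an ordered field: `qpow c q` is the unique positive `y` with
`y ^ q.den = c ^ q.num`, when it exists (and `0` otherwise). -/
noncomputable def qpow {A : Type*} [Field A] [LinearOrder A] [IsStrictOrderedRing A] (c : A) (q : ℚ) : A :=
  if h : ∃ y : A, 0 < y ∧ y ^ (q.den : ℕ) = c ^ (q.num : ℤ) then h.choose else 0

/-- Boolean combinations of sets from the collection `G`. -/
inductive BoolComb {α : Type*} (G : Set (Set α)) : Set α → Prop
  | basic {s : Set α} : s ∈ G → BoolComb G s
  | compl {s : Set α} : BoolComb G s → BoolComb G sᶜ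
  | union {s t : Set α} : BoolComb G s → BoolComb G t → BoolComb G (s ∪ t)

end PaperDep
namespace PaperDep

/-- The language of ordered rings `{<, +, -, ·, 0, 1}`: constants `0, 1` (`Fin 2`),
a unary function `-`, binary functions `+, ·` (`Fin 2`), and a binary relation `<`. -/
def oRingLang : FirstOrder.Language.{0, 0} :=
  ⟨fun n => match n with | 0 => Fin 2 | 1 => PUnit | 2 => Fin 2 | _ => Empty,
    fun n => match n with | 2 => PUnit | _ => Empty⟩

/-- The standard interpretation of the language of ordered rings in `ℝ`. -/
def oRingStructureR : oRingLang.Structure ℝ where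
  funMap := fun {n} f x =>
    match n, f with
    | 0, f => ![(0 : ℝ), 1] f
    | 1, _ => -(x 0)
    | 2, f => ![x 0 + x 1, x 0 * x 1] f
    | (_ + 3), f => Empty.elim f
  RelMap := fun {n} r x =>
    match n, r with
    | 2, _ => x 0 < x 1
    | 0, r => Empty.elim r
    | 1, r => Empty.elim r
    | (_ + 3), r => Empty.elim r

/-- `F : M → M` is definable (with parameters) in the `L`-structure `M`. -/
def DefinableFun (L : FirstOrder.Language) (M : Type*) [L.Structure M] (F : M → M) : Prop :=
  (Set.univ : Set M).Definable L {x : Fin 2 → M | F (x 0) = x 1}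

/-- The `L`-structure `ℝ` is polynomially bounded. -/
def PolyBounded (L : FirstOrder.Language) [L.Structure ℝ] : Prop :=
  ∀ F : ℝ → ℝ, DefinableFun L ℝ F → ∃ (n : ℕ) (x₀ : ℝ), ∀ x : ℝ, x₀ ≤ x → |F x| ≤ x ^ n

/-- The `L`-structure `ℝ` has field of exponents `ℚ`. -/
def FieldOfExpQ (L : FirstOrder.Language) [L.Structure ℝ] : Prop :=
  ∀ F : ℝ → ℝ, DefinableFun L ℝ F →
    (∀ x y : ℝ, 0 < x → 0 < y → F (x * y) = F x * F y) →
    ∃ q : ℚ, ∀ x : ℝ, 0 < x → F x = x ^ (q : ℝ)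

open Classical in
/-- `lam x` is the unique `g ∈ 2^ℤ` with `g ≤ x < 2g` for `x > 0`, and `0` for `x ≤ 0`. -/
noncomputable def lam : ℝ → ℝ := fun x =>
  if h : ∃ k : ℤ, (2 : ℝ) ^ k ≤ x ∧ x < 2 * (2 : ℝ) ^ k then (2 : ℝ) ^ h.choose else 0

/-- The pure closure `H_G⟨g₁, …, g_m⟩` of the subgroup `H` together with `g₁, …, g_m`
inside the (multiplicatively written, torsion-free abelian) group `G`. -/
def pureClosure {A : Type*} [Field A] [LinearOrder A] [IsStrictOrderedRing A] (G H : Set A) {m : ℕ}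
    (g : Fin m → A) : Set A :=
  {x ∈ G | ∃ M₀ : ℕ, 0 < M₀ ∧ ∃ h ∈ H, ∃ k : Fin m → ℤ,
    x ^ M₀ = h * ∏ i, g i ^ k i}

end PaperDep

namespace PaperDep

theorem extendSM {k : ℕ} (i : Fin k → ℕ) (hi : StrictMono i) :
    ∃ I : ℕ → ℕ, StrictMono I ∧ ∀ v : Fin k, I ↑v = i v := by
  cases k with
  | zero => exact ⟨id, strictMono_id, fun v => v.elim0⟩
  | succ k =>
    refine ⟨fun n => if h : n < k + 1 then i ⟨n, h⟩ else i (Fin.last k) + 1 + (n - (k+1)),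
      ?_, fun v => by simp [v.isLt]⟩
    intro a b hab
    simp only
    by_cases ha : a < k + 1 <;> by_cases hb : b < k + 1
    · rw [dif_pos ha, dif_pos hb]
      exact hi (show (⟨a, ha⟩ : Fin (k+1)) < ⟨b, hb⟩ from hab)
    · rw [dif_pos ha, dif_neg hb]
      have : i ⟨a, ha⟩ ≤ i (Fin.last k) := hi.monotone (Fin.le_last _)
      omega
    · omega
    · rw [dif_neg ha, dif_neg hb]
      omega

theorem ramsey {C : Type*} [Finite C] : ∀ (r : ℕ) (f : (Fin r → ℕ) → C),
    ∃ G : ℕ → ℕ, StrictMono G ∧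
      ∀ i j : Fin r → ℕ, StrictMono i → StrictMono j → f (G ∘ i) = f (G ∘ j) := by
  intro r
  induction r with
  | zero =>
    intro f
    exact ⟨id, strictMono_id, fun i j _ _ => by
      have : i = j := funext fun v => v.elim0
      rw [this]⟩
  | succ r IH =>
    intro f
    choose G₀ hG₀mono hG₀hom using IH
    set fk : (ℕ → ℕ) → (Fin r → ℕ) → C :=
      fun e t => f (Fin.cons (e 0) (fun v => e (t v + 1))) with hfk
    set F : ℕ → (ℕ → ℕ) := fun k =>
      Nat.rec id (fun _ e => e ∘ (· + 1) ∘ G₀ (fk e)) k with hF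
    have hFsucc : ∀ k x, F (k+1) x = F k (G₀ (fk (F k)) x + 1) := fun k x => rfl
    have hFmono : ∀ k, StrictMono (F k) := by
      intro k
      induction k with
      | zero => exact strictMono_id
      | succ k ih =>
        intro a b hab
        rw [hFsucc, hFsucc]
        exact ih (by have := hG₀mono (fk (F k)) hab; omega)
    set n : ℕ → ℕ := fun k => F k 0 with hn
    set c : ℕ → C := fun k => f (Fin.cons (n k) (fun v : Fin r => F (k+1) ↑v)) with hc
    have homog : ∀ (k : ℕ) (t : Fin r → ℕ), StrictMono t →
        f (Fin.cons (n k) (fun v => F (k+1) (t v))) = c k := by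
      intro k t ht
      have h1 : f (Fin.cons (n k) (fun v => F (k+1) (t v)))
          = fk (F k) (G₀ (fk (F k)) ∘ t) := by
        simp only [hfk]
        congr 1
      have h2 : c k = fk (F k) (G₀ (fk (F k)) ∘ (fun v : Fin r => (v : ℕ))) := by
        simp only [hc, hfk]
        congr 1
      rw [h1, h2]
      exact hG₀hom (fk (F k)) t (fun v => ↑v) ht (fun a b hab => hab)
    have nest : ∀ k d x, ∃ y, F (k + d) x = F k y := by
      intro k d
      induction d with
      | zero => exact fun x => ⟨x, rfl⟩
      | succ d ih =>
        intro x
        obtain ⟨y, hy⟩ := ih (G₀ (fk (F (k+d))) x + 1)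
        exact ⟨y, by rw [show k + (d+1) = (k+d) + 1 from rfl, hFsucc]; exact hy⟩
    have nmono : StrictMono n := by
      apply strictMono_nat_of_lt_succ
      intro k
      have : F (k+1) 0 = F k (G₀ (fk (F k)) 0 + 1) := hFsucc k 0
      rw [hn]
      simp only
      rw [this]
      exact hFmono k (by omega)
    obtain ⟨cinf, hcinf⟩ := Finite.exists_infinite_fiber c
    have hinf : {k | c k = cinf}.Infinite := by
      rw [← Set.infinite_coe_iff]
      exact hcinf
    set p : ℕ → Prop := fun k => c k = cinf with hp
    have hpinf : (setOf p).Infinite := hinf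
    have Knth := Nat.nth_strictMono (p := p) hpinf
    have Kmem : ∀ q, p (Nat.nth p q) := fun q => Nat.nth_mem_of_infinite hpinf q
    refine ⟨n ∘ Nat.nth p, nmono.comp Knth, ?_⟩
    have main : ∀ i : Fin (r+1) → ℕ, StrictMono i → f ((n ∘ Nat.nth p) ∘ i) = cinf := by
      intro i hi
      set k := Nat.nth p (i 0) with hk
      have hgt : ∀ v : Fin r, k + 1 ≤ Nat.nth p (i v.succ) := by
        intro v
        have : i 0 < i v.succ := hi (Fin.succ_pos v)
        have := Knth this
        omega
      have ex : ∀ v : Fin r, ∃ y, n (Nat.nth p (i v.succ)) = F (k+1) y := by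
        intro v
        obtain ⟨d, hd⟩ := Nat.exists_eq_add_of_le (hgt v)
        obtain ⟨y, hy⟩ := nest (k+1) d 0
        exact ⟨y, by rw [hn]; simp only; rw [hd, hy]⟩
      choose t ht using ex
      have htmono : StrictMono t := by
        intro a b hab
        have h1 : F (k+1) (t a) < F (k+1) (t b) := by
          rw [← ht, ← ht]
          exact nmono (Knth (hi (Fin.succ_lt_succ_iff.mpr hab)))
        exact (hFmono (k+1)).lt_iff_lt.mp h1
      have hdec : (n ∘ Nat.nth p) ∘ i = Fin.cons (n k) (fun v => F (k+1) (t v)) := by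
        funext w
        refine Fin.cases ?_ ?_ w
        · simp [hk]
        · intro v
          simp [Fin.cons_succ, ← ht v]
      rw [hdec, homog k t htmono]
      exact Kmem (i 0)
    intro i j hi hj
    rw [main i hi, main j hj]

/-- Conjunction of a list of formulas. -/
def andList {L : FirstOrder.Language} {α : Type*} (l : List (L.Formula α)) : L.Formula α :=
  l.foldr (· ⊓ ·) ⊤

theorem realize_andList {L : FirstOrder.Language} {α : Type*} {M : Type*} [L.Structure M]
    (l : List (L.Formula α)) (v : α → M) :
    (andList l).Realize v ↔ ∀ φ ∈ l, φ.Realize v := by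
  induction l with
  | nil => simp [andList]
  | cons φ l ih =>
    simp only [andList, List.foldr_cons, Formula.realize_inf, List.mem_cons]
    rw [show List.foldr (· ⊓ ·) ⊤ l = andList l from rfl, ih]
    constructor
    · rintro ⟨h1, h2⟩ ψ (rfl | hψ)
      · exact h1
      · exact h2 _ hψ
    · intro h
      exact ⟨h φ (Or.inl rfl), fun ψ hψ => h ψ (Or.inr hψ)⟩


section FormulaHelpers

variable {L : FirstOrder.Language} {M : Type*} [L.Structure M] {α : Type*} {γ : Type*}

/-- Universal quantification over one extra variable. -/
noncomputable def allE (ψ : L.Formula (α ⊕ Fin 1)) : L.Formula α :=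
  Formula.iAlls (Fin 1) ψ

theorem realize_allE (ψ : L.Formula (α ⊕ Fin 1)) (v : α → M) :
    (allE ψ).Realize v ↔ ∀ z : M, ψ.Realize (Sum.elim v (fun _ => z)) := by
  rw [allE, Formula.realize_iAlls]
  constructor
  · intro h z
    exact h (fun _ => z)
  · intro h w
    show ψ.Realize (Sum.elim v w)
    have h2 := h (w 0)
    have hext : Sum.elim v (fun _ : Fin 1 => w 0) = Sum.elim v w := by
      funext b
      rcases b with b | b
      · rfl
      · show w 0 = w b
        rw [Fin.eq_zero b]
    rwa [hext] at h2

/-- Existential quantification over a finite family of extra variables. -/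
noncomputable def exE (ψ : L.Formula (γ ⊕ α)) [Finite γ] : L.Formula α :=
  Formula.iExs γ (ψ.relabel (Sum.elim Sum.inr Sum.inl : γ ⊕ α → α ⊕ γ))

theorem realize_exE [Finite γ] (ψ : L.Formula (γ ⊕ α)) (v : α → M) :
    (exE ψ).Realize v ↔ ∃ w : γ → M, ψ.Realize (Sum.elim w v) := by
  rw [exE, Formula.realize_iExs]
  have key : ∀ w : γ → M, (Sum.elim v w ∘ (Sum.elim Sum.inr Sum.inl : γ ⊕ α → α ⊕ γ))
      = Sum.elim w v := fun w => funext fun b => by rcases b with b | b <;> rfl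
  constructor
  · rintro ⟨w, h⟩
    rw [Formula.realize_relabel, key w] at h
    exact ⟨w, h⟩
  · rintro ⟨w, h⟩
    refine ⟨w, ?_⟩
    rw [Formula.realize_relabel, key w]
    exact h

/-- Substituting the variable `yslot` by a fresh variable. -/
noncomputable def substY [DecidableEq α] (yslot : α) (φ : L.Formula α) : L.Formula (α ⊕ Fin 1) :=
  Formula.relabel (fun b => if b = yslot then Sum.inr 0 else Sum.inl b) φ

theorem realize_substY [DecidableEq α] (yslot : α) (φ : L.Formula α) (V : α ⊕ Fin 1 → M) :
    (substY yslot φ).Realize V ↔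
      φ.Realize (fun b => if b = yslot then V (Sum.inr 0) else V (Sum.inl b)) := by
  rw [substY, Formula.realize_relabel]
  have hext : V ∘ (fun b => if b = yslot then Sum.inr 0 else Sum.inl b)
      = (fun b => if b = yslot then V (Sum.inr 0) else V (Sum.inl b)) := by
    funext b
    by_cases hb : b = yslot <;> simp [hb]
  rw [hext]

end FormulaHelpers

/-- Proposition 2.4 of "Dependent Pairs": if `(aᵢ)` is an indiscernible
sequence in a sufficiently saturated model `M` of an `L(U)`-theory and some `aᵢ` lies in the
`L`-definable closure of `U(M) ∪ {a₀, …, a_{i₀}}` for some `i₀ < i`, then there are a function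
`f : Mᵐ → M` whose graph is definable in `M` over `a₀, …, a_{i₀}` and an indiscernible
sequence `(g⃗ᵢ)_{i > i₀}` of tuples from `U(M)ᵐ` with `f(g⃗ᵢ) = aᵢ`. -/
theorem statement_2 (L : FirstOrder.Language.{0, 0}) (M : Type) [L.Structure M]
    (B : Set M) :
    letI : (LU L).Structure M := LUStructure L M B
    ∀ (T_U : (LU L).Theory) (_ : T_U.Model M)
      (κ : Cardinal.{0}) (_ : (LU L).card + Cardinal.aleph0 < κ)
      (_ : IsSaturated (LU L) M κ)
      (a : ℕ → M)
      (_ : IsIndiscernible (LU L) (fun i (_ : Fin 1) => a i))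
      (i₀ i : ℕ), i₀ < i →
      a i ∈ dclIn L M (B ∪ a '' Set.Iic i₀) →
      ∃ (m : ℕ) (f : (Fin m → M) → M),
        (∃ φ : (LU L).Formula ((Fin m ⊕ Fin 1) ⊕ Fin (i₀ + 1)),
          ∀ (x : Fin m → M) (y : M),
            f x = y ↔ φ.Realize (Sum.elim (Sum.elim x fun _ => y) fun j => a j)) ∧
        ∃ g : ℕ → Fin m → M,
          IsIndiscernible (LU L) g ∧
          ∀ i' : ℕ, (∀ t : Fin m, g i' t ∈ B) ∧ f (g i') = a (i' + i₀ + 1) := by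
  letI instLU : (LU L).Structure M := LUStructure L M B
  intro T_U _ κ hκ hsat a ha i₀ i hi₀i hdcl
  classical
  letI instU : unaryRelLang.Structure M := unaryRelStructure M B
  haveI hexp : (LHom.sumInl : L →ᴸ LU L).IsExpansionOn M := LHom.sumInl_isExpansionOn M
  have hκ0 : Cardinal.aleph0 < κ := lt_of_le_of_lt (self_le_add_left _ _) hκ
  -- U-membership realization
  have hUreal : ∀ (γ : Type) (V : γ → M) (z : γ),
      ((Relations.formula (L := LU L) (α := γ) (n := 1) (Sum.inr PUnit.unit) ![Term.var z]).Realize V)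
        ↔ V z ∈ B := by
    intro γ V z
    exact Iff.rfl
  -- ============ extraction of the defining formula ============
  obtain ⟨χ, hχr, hχu⟩ := hdcl
  have hss : ↑χ.freeVarFinset ⊆ (↑χ.freeVarFinset : Set (↥(B ∪ a '' Set.Iic i₀) ⊕ Fin 1)) :=
    subset_rfl
  let χ₁ := χ.restrictFreeVar (Set.inclusion hss)
  let bad : ↥(B ∪ a '' Set.Iic i₀) ⊕ Fin 1 → Prop :=
    fun w => ∃ p : ↥(B ∪ a '' Set.Iic i₀), w = Sum.inl p ∧ ↑p ∉ a '' Set.Iic i₀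
  let tB : Finset M :=
    (χ.freeVarFinset.filter bad).image (Sum.elim (Subtype.val) (fun _ => a 0))
  let m := tB.card
  let e : ↥tB ≃ Fin m := tB.equivFin
  let u : Fin m → M := fun t => ↑(e.symm t)
  have hu : ∀ t, u t ∈ B := by
    intro t
    have hmem : ((e.symm t : ↥tB) : M) ∈ tB := (e.symm t).2
    obtain ⟨w, hw, hval⟩ := Finset.mem_image.mp hmem
    obtain ⟨hwf, hwbad⟩ := Finset.mem_filter.mp hw
    obtain ⟨p, rfl, hpB⟩ := hwbad
    have hval' : ((e.symm t : ↥tB) : M) = ↑p := hval.symm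
    show ((e.symm t : ↥tB) : M) ∈ B
    rw [hval']
    rcases p.2 with h | h
    · exact h
    · exact absurd h hpB
  -- classification map
  let ρ0 : ↥(B ∪ a '' Set.Iic i₀) ⊕ Fin 1 → (Fin m ⊕ Fin 1) ⊕ Fin (i₀+1) :=
    fun w => Sum.rec
      (fun p => if h : ↑p ∈ a '' Set.Iic i₀ then
          Sum.inr ⟨h.choose, by have := h.choose_spec.1; exact Nat.lt_succ_of_le this⟩
        else if h2 : (p : M) ∈ tB then Sum.inl (Sum.inl (e ⟨↑p, h2⟩)) else Sum.inl (Sum.inr 0))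
      (fun k => Sum.inl (Sum.inr k)) w
  let φL : L.Formula ((Fin m ⊕ Fin 1) ⊕ Fin (i₀+1)) :=
    Formula.relabel
      (fun w : ↥(↑χ.freeVarFinset : Set (↥(B ∪ a '' Set.Iic i₀) ⊕ Fin 1)) => ρ0 ↑w) χ₁
  -- the standard valuation
  let VL : (Fin m → M) → M → ((Fin m ⊕ Fin 1) ⊕ Fin (i₀+1)) → M :=
    fun x y => Sum.elim (Sum.elim x fun _ => y) (fun j : Fin (i₀+1) => a ↑j)
  have keyval : ∀ (y : M) (w : ↥(↑χ.freeVarFinset : Set (↥(B ∪ a '' Set.Iic i₀) ⊕ Fin 1))),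
      VL u y (ρ0 ↑w) = Sum.elim (Subtype.val) (fun _ => y) (↑w : ↥(B ∪ a '' Set.Iic i₀) ⊕ Fin 1) := by
    rintro y ⟨z, hz⟩
    rcases z with p | k
    · show VL u y (ρ0 (Sum.inl p)) = ↑p
      by_cases h : ↑p ∈ a '' Set.Iic i₀
      · show VL u y (dite _ _ _) = ↑p
        rw [dif_pos h]
        exact h.choose_spec.2
      · have h2 : (p : M) ∈ tB := by
          refine Finset.mem_image.mpr ⟨Sum.inl p, Finset.mem_filter.mpr ⟨hz, ⟨p, rfl, h⟩⟩, rfl⟩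
        show VL u y (dite _ _ _) = ↑p
        rw [dif_neg h, dif_pos h2]
        show u (e ⟨↑p, h2⟩) = ↑p
        show ((e.symm (e ⟨↑p, h2⟩) : ↥tB) : M) = ↑p
        rw [Equiv.symm_apply_apply]
    · rfl
  have hφL : ∀ y : M,
      φL.Realize (VL u y) ↔ χ.Realize (Sum.elim (Subtype.val) (fun _ => y)) := by
    intro y
    rw [show φL.Realize (VL u y) ↔ Formula.Realize χ₁ ((VL u y) ∘
        (fun w : ↥(↑χ.freeVarFinset : Set (↥(B ∪ a '' Set.Iic i₀) ⊕ Fin 1)) => ρ0 ↑w))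
      from Formula.realize_relabel]
    rw [show ((VL u y) ∘
        (fun w : ↥(↑χ.freeVarFinset : Set (↥(B ∪ a '' Set.Iic i₀) ⊕ Fin 1)) => ρ0 ↑w))
        = (Sum.elim (Subtype.val) (fun _ => y)) ∘ (Subtype.val) from funext (keyval y)]
    exact BoundedFormula.realize_restrictFreeVar' hss
  -- ============ the function f and its graph formula ============
  let yslot : (Fin m ⊕ Fin 1) ⊕ Fin (i₀+1) := Sum.inl (Sum.inr 0)
  let θf : L.Formula ((Fin m ⊕ Fin 1) ⊕ Fin (i₀+1)) :=
    φL ⊓ allE ((substY yslot φL).imp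
      (Term.equal (Term.var (Sum.inr (0 : Fin 1))) (Term.var (Sum.inl yslot))))
  let Θ : (Fin m → M) → M → Prop := fun x y => Formula.Realize θf (VL x y)
  have hVLval : ∀ (x : Fin m → M) (y : M), VL x y yslot = y := fun _ _ => rfl
  have hVLsubst : ∀ (x : Fin m → M) (y z : M),
      (fun b => if b = yslot then z else VL x y b) = VL x z := by
    intro x y z
    funext b
    by_cases hb : b = yslot
    · rw [if_pos hb, hb]
      rfl
    · rw [if_neg hb]
      rcases b with (t | k) | j
      · rfl
      · exact absurd (by rw [Fin.eq_zero k] : (Sum.inl (Sum.inr k) : (Fin m ⊕ Fin 1) ⊕ Fin (i₀+1)) = yslot) hb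
      · rfl
  have hΘiff : ∀ x y, Θ x y ↔ (φL.Realize (VL x y) ∧ ∀ z, φL.Realize (VL x z) → z = y) := by
    intro x y
    show (φL ⊓ _).Realize (VL x y) ↔ _
    rw [Formula.realize_inf, realize_allE]
    refine and_congr_right fun _ => forall_congr' fun z => ?_
    rw [Formula.realize_imp, realize_substY]
    simp only [Sum.elim_inl, Sum.elim_inr, Formula.realize_equal, Term.realize_var]
    rw [hVLsubst, hVLval]
  let noSol : L.Formula ((Fin m ⊕ Fin 1) ⊕ Fin (i₀+1)) := allE ((substY yslot θf).not)
  let yEq : L.Formula ((Fin m ⊕ Fin 1) ⊕ Fin (i₀+1)) :=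
    Term.equal (Term.var yslot) (Term.var (Sum.inr (Fin.last i₀)))
  let φgraph : L.Formula ((Fin m ⊕ Fin 1) ⊕ Fin (i₀+1)) := θf ⊔ (noSol ⊓ yEq)
  have hφgraph : ∀ x y, Formula.Realize φgraph (VL x y) ↔
      (Θ x y ∨ ((∀ z, ¬ Θ x z) ∧ y = a i₀)) := by
    intro x y
    show (θf ⊔ (noSol ⊓ yEq)).Realize (VL x y) ↔ _
    rw [Formula.realize_sup]
    refine or_congr Iff.rfl ?_
    rw [Formula.realize_inf]
    refine and_congr ?_ ?_
    · rw [show noSol.Realize (VL x y) ↔ _ from realize_allE _ _]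
      refine forall_congr' fun z => ?_
      rw [Formula.realize_not, realize_substY]
      simp only [Sum.elim_inl, Sum.elim_inr]
      rw [hVLsubst]
    · rw [show yEq.Realize (VL x y) ↔ _ from Formula.realize_equal]
      simp only [Term.realize_var]
      show VL x y yslot = VL x y (Sum.inr (Fin.last i₀)) ↔ _
      rw [hVLval]
      show y = a ↑(Fin.last i₀) ↔ _
      rw [Fin.val_last]
  let f : (Fin m → M) → M := fun x => if h : ∃ y, Θ x y then h.choose else a i₀
  have hfeq : ∀ x y, Θ x y → f x = y := by
    intro x y hy
    have hex : ∃ y, Θ x y := ⟨y, hy⟩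
    show dite _ _ _ = y
    rw [dif_pos hex]
    obtain ⟨-, hyu⟩ := (hΘiff x y).mp hy
    exact hyu _ ((hΘiff x hex.choose).mp hex.choose_spec).1
  have hgraphiff : ∀ x y, f x = y ↔ Formula.Realize φgraph (VL x y) := by
    intro x y
    rw [hφgraph]
    constructor
    · rintro rfl
      by_cases h : ∃ y', Θ x y'
      · left
        rw [show f x = h.choose from dif_pos h]
        exact h.choose_spec
      · right
        exact ⟨fun z hz => h ⟨z, hz⟩, dif_neg h⟩
    · rintro (hy | ⟨hno, rfl⟩)
      · exact hfeq x y hy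
      · exact dif_neg fun hex => hno hex.choose hex.choose_spec
  have hΘbase : Θ u (a i) :=
    (hΘiff u (a i)).mpr ⟨(hφL (a i)).mpr hχr, fun z hz => hχu z ((hφL z).mp hz)⟩
  -- ============ the type of indiscernibility data ============
  let S0 : Type := Σ k : ℕ, ((LU L).Formula (Fin k × Fin m)) × (Fin k → ℕ) × (Fin k → ℕ)
  let A : Set M := Set.range a
  have aA : ∀ q : ℕ, a q ∈ A := fun q => Set.mem_range_self q
  let θLU : (LU L).Formula ((Fin m ⊕ Fin 1) ⊕ Fin (i₀+1)) := LHom.sumInl.onFormula θf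
  have hθLU : ∀ V : ((Fin m ⊕ Fin 1) ⊕ Fin (i₀+1)) → M,
      Formula.Realize θLU V ↔ Formula.Realize θf V := fun V => @LHom.realize_onFormula L (LU L) M _ _ _ LHom.sumInl hexp θf V
  have VLrw : ∀ (x : Fin m → M) (y z : M) (c : Fin (i₀+1) → ℕ), y = z → (∀ j, c j = ↑j) →
      (Sum.elim (Sum.elim x fun _ => y) fun j : Fin (i₀+1) => a (c j)) = VL x z := by
    intro x y z c hyz hc
    funext b
    rcases b with (t | k) | j
    · rfl
    · exact hyz
    · show a (c j) = a ↑j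
      rw [hc j]
  let Good : ℕ → Finset S0 → ((ℕ × Fin m) → M) → Prop := fun N D v =>
    (∀ p : ℕ × Fin m, p.1 < N → v p ∈ B) ∧
    (∀ n, n < N → Θ (fun t => v (n, t)) (a (n+i₀+1))) ∧
    (∀ d ∈ D, StrictMono d.2.2.1 → StrictMono d.2.2.2 →
      (d.2.1.Realize (fun v' : Fin d.1 × Fin m => v (d.2.2.1 v'.1, v'.2)) ↔
       d.2.1.Realize (fun v' : Fin d.1 × Fin m => v (d.2.2.2 v'.1, v'.2))))
  -- ============ the key construction ============
  have KEY : ∀ (N₀ : ℕ) (D : Finset S0), ∃ v : (ℕ × Fin m) → M, Good N₀ D v := by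
    intro N₀ D
    let ntf : (NN : ℕ) → 0 < NN → ℕ → Fin NN := fun NN h q => ⟨q % NN, Nat.mod_lt _ h⟩
    let mkρ : (NN : ℕ) → Fin NN → ((Fin m ⊕ Fin 1) ⊕ Fin (i₀+1)) →
        ((Fin NN × Fin m) ⊕ (Fin (i₀+1+NN) × Fin 1)) := fun NN n =>
      Sum.elim (Sum.elim (fun t => Sum.inl (n, t))
        (fun _ => Sum.inr (⟨i₀+1+↑n, by omega⟩, 0)))
        (fun j => Sum.inr (⟨↑j, by omega⟩, 0))
    let Ξlist : (NN : ℕ) → 0 < NN → Finset S0 →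
        List ((LU L).Formula ((Fin NN × Fin m) ⊕ (Fin (i₀+1+NN) × Fin 1))) := fun NN h Dv =>
      ((List.finRange NN).flatMap fun n => (List.finRange m).map fun t =>
        Relations.formula (L := LU L) (n := 1) (Sum.inr PUnit.unit) ![Term.var (Sum.inl (n, t))])
      ++ ((List.finRange NN).map fun n => Formula.relabel (mkρ NN n) θLU)
      ++ (Dv.toList.map fun d =>
        (Formula.relabel (fun v : Fin d.1 × Fin m =>
          (Sum.inl ((ntf NN h (d.2.2.1 v.1), v.2)) : (Fin NN × Fin m) ⊕ (Fin (i₀+1+NN) × Fin 1))) d.2.1).iff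
        (Formula.relabel (fun v : Fin d.1 × Fin m =>
          (Sum.inl ((ntf NN h (d.2.2.2 v.1), v.2)) : (Fin NN × Fin m) ⊕ (Fin (i₀+1+NN) × Fin 1))) d.2.1))
    let Ξ : (NN : ℕ) → 0 < NN → Finset S0 → (LU L).Formula (Fin (i₀+1+NN) × Fin 1) :=
      fun NN h Dv => exE (andList (Ξlist NN h Dv))
    have EX : ∀ (NN : ℕ) (h : 0 < NN) (Dv : Finset S0) (idx : Fin (i₀+1+NN) → ℕ),
        (Ξ NN h Dv).Realize (fun v : Fin (i₀+1+NN) × Fin 1 => a (idx v.1)) ↔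
        ∃ g' : Fin NN → Fin m → M,
          (∀ n t, g' n t ∈ B) ∧
          (∀ n : Fin NN, Formula.Realize θf
            (Sum.elim (Sum.elim (g' n) (fun _ => a (idx ⟨i₀+1+↑n, by omega⟩)))
              (fun j : Fin (i₀+1) => a (idx ⟨↑j, by omega⟩)))) ∧
          (∀ d ∈ Dv,
            (d.2.1.Realize (fun v : Fin d.1 × Fin m => g' (ntf NN h (d.2.2.1 v.1)) v.2) ↔
             d.2.1.Realize (fun v : Fin d.1 × Fin m => g' (ntf NN h (d.2.2.2 v.1)) v.2))) := by
      intro NN h Dv idx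
      rw [show (Ξ NN h Dv).Realize (fun v : Fin (i₀+1+NN) × Fin 1 => a (idx v.1)) ↔ _
        from realize_exE _ _]
      set V : Fin (i₀+1+NN) × Fin 1 → M := fun v => a (idx v.1) with hV
      constructor
      · rintro ⟨w, hw⟩
        rw [realize_andList] at hw
        refine ⟨fun n t => w (n, t), ?_, ?_, ?_⟩
        · intro n t
          have hmem : (Relations.formula (L := LU L) (n := 1) (Sum.inr PUnit.unit)
              ![Term.var (Sum.inl (n, t))]) ∈ Ξlist NN h Dv :=
            List.mem_append_left _ (List.mem_append_left _
              (List.mem_flatMap.mpr ⟨n, List.mem_finRange n,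
                List.mem_map.mpr ⟨t, List.mem_finRange t, rfl⟩⟩))
          exact (hUreal _ _ _).mp (hw _ hmem)
        · intro n
          have hmem : (Formula.relabel (mkρ NN n) θLU) ∈ Ξlist NN h Dv :=
            List.mem_append_left _ (List.mem_append_right _
              (List.mem_map.mpr ⟨n, List.mem_finRange n, rfl⟩))
          have hre := hw _ hmem
          rw [Formula.realize_relabel] at hre
          rw [show (Sum.elim w V) ∘ (mkρ NN n) = (Sum.elim (Sum.elim (fun t => w (n, t))
              (fun _ => a (idx ⟨i₀+1+↑n, by omega⟩)))
              (fun j : Fin (i₀+1) => a (idx ⟨↑j, by omega⟩))) from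
            funext fun b => by rcases b with (t | k) | j <;> rfl] at hre
          exact (hθLU _).mp hre
        · intro d hd
          have hmem : ((Formula.relabel (fun v : Fin d.1 × Fin m =>
              (Sum.inl ((ntf NN h (d.2.2.1 v.1), v.2)) : (Fin NN × Fin m) ⊕ (Fin (i₀+1+NN) × Fin 1))) d.2.1).iff
              (Formula.relabel (fun v : Fin d.1 × Fin m =>
              (Sum.inl ((ntf NN h (d.2.2.2 v.1), v.2)) : (Fin NN × Fin m) ⊕ (Fin (i₀+1+NN) × Fin 1))) d.2.1))
              ∈ Ξlist NN h Dv :=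
            List.mem_append_right _ (List.mem_map.mpr ⟨d, Finset.mem_toList.mpr hd, rfl⟩)
          have hre := hw _ hmem
          rw [Formula.realize_iff, Formula.realize_relabel, Formula.realize_relabel] at hre
          exact hre
      · rintro ⟨g', hB, hθ', hD⟩
        refine ⟨fun q => g' q.1 q.2, ?_⟩
        rw [realize_andList]
        intro F hF
        rcases List.mem_append.mp hF with hF' | hF'
        · rcases List.mem_append.mp hF' with hF'' | hF''
          · obtain ⟨n, -, hF3⟩ := List.mem_flatMap.mp hF''
            obtain ⟨t, -, rfl⟩ := List.mem_map.mp hF3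
            exact (hUreal _ _ _).mpr (hB n t)
          · obtain ⟨n, -, rfl⟩ := List.mem_map.mp hF''
            rw [Formula.realize_relabel]
            rw [show (Sum.elim (fun q : Fin NN × Fin m => g' q.1 q.2) V) ∘ (mkρ NN n)
                = (Sum.elim (Sum.elim (g' n) (fun _ => a (idx ⟨i₀+1+↑n, by omega⟩)))
                  (fun j : Fin (i₀+1) => a (idx ⟨↑j, by omega⟩))) from
              funext fun b => by rcases b with (t | k) | j <;> rfl]
            exact (hθLU _).mpr (hθ' n)
        · obtain ⟨d, hdmem, rfl⟩ := List.mem_map.mp hF'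
          rw [Formula.realize_iff, Formula.realize_relabel, Formula.realize_relabel]
          exact hD d (Finset.mem_toList.mp hdmem)
    -- ---- witnesses ----
    have Wit : ∀ q : ℕ, ∃ hh : Fin m → M, (∀ t, hh t ∈ B) ∧ Θ hh (a (q+i₀+1)) := by
      intro q
      have h1 : (0:ℕ) < 1 := one_pos
      let idx1 : Fin (i₀+1+1) → ℕ := fun v => if (v:ℕ) ≤ i₀ then (v:ℕ) else i
      let idxq : Fin (i₀+1+1) → ℕ := fun v => if (v:ℕ) ≤ i₀ then (v:ℕ) else q+i₀+1
      have hidx1 : StrictMono idx1 := by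
        intro b c hbc
        have hb2 := b.isLt
        have hc2 := c.isLt
        have hbc' : (b:ℕ) < (c:ℕ) := hbc
        show (if (b:ℕ) ≤ i₀ then (b:ℕ) else i) < (if (c:ℕ) ≤ i₀ then (c:ℕ) else i)
        split_ifs with h h' h' <;> omega
      have hidxq : StrictMono idxq := by
        intro b c hbc
        have hb2 := b.isLt
        have hc2 := c.isLt
        have hbc' : (b:ℕ) < (c:ℕ) := hbc
        show (if (b:ℕ) ≤ i₀ then (b:ℕ) else q+i₀+1) < (if (c:ℕ) ≤ i₀ then (c:ℕ) else q+i₀+1)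
        split_ifs with h h' h' <;> omega
      have base : (Ξ 1 h1 ∅).Realize (fun v : Fin (i₀+1+1) × Fin 1 => a (idx1 v.1)) := by
        rw [EX 1 h1 ∅ idx1]
        refine ⟨fun _ => u, fun n t => hu t, ?_, by simp⟩
        intro n
        rw [VLrw u _ (a i) _ ?_ ?_]
        · exact hΘbase
        · show a (if (i₀+1+(n:ℕ) : ℕ) ≤ i₀ then (i₀+1+(n:ℕ):ℕ) else i) = a i
          rw [if_neg (by omega)]
        · intro j
          have hj := j.isLt
          show (if ((j:ℕ):ℕ) ≤ i₀ then ((j:ℕ):ℕ) else i) = (j:ℕ)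
          rw [if_pos (by omega)]
      have trans := ha (i₀+1+1) (Ξ 1 h1 ∅) idx1 idxq hidx1 hidxq
      have base' : (Ξ 1 h1 ∅).Realize (fun v : Fin (i₀+1+1) × Fin 1 => a (idxq v.1)) :=
        trans.mp base
      obtain ⟨g', hB, hθ', -⟩ := (EX 1 h1 ∅ idxq).mp base'
      refine ⟨g' 0, hB 0, ?_⟩
      have hrw := VLrw (g' 0) (a (idxq ⟨i₀+1+((0: Fin 1):ℕ), by omega⟩)) (a (q+i₀+1))
        (fun j => idxq ⟨(j:ℕ), by omega⟩) ?_ ?_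
      · show Formula.Realize θf (VL (g' 0) (a (q+i₀+1)))
        rw [← hrw]
        exact hθ' 0
      · show a (if (i₀+1+((0: Fin 1):ℕ) : ℕ) ≤ i₀ then (i₀+1+((0:Fin 1):ℕ):ℕ) else q+i₀+1)
          = a (q+i₀+1)
        rw [if_neg (by omega)]
      · intro j
        have hj := j.isLt
        show (if ((j:ℕ):ℕ) ≤ i₀ then ((j:ℕ):ℕ) else q+i₀+1) = (j:ℕ)
        rw [if_pos (by omega)]
    choose H hHB hHΘ using Wit
    -- ---- Ramsey ----
    let Dv : Finset S0 := D.filter (fun d => StrictMono d.2.2.1 ∧ StrictMono d.2.2.2)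
    let r : ℕ := Dv.sup (fun d => d.1)
    obtain ⟨G, hGmono, hGhom⟩ := ramsey (C := ↥Dv → Bool) r (fun σ d =>
      decide (d.1.2.1.Realize (fun v : Fin d.1.1 × Fin m =>
        H (σ (Fin.castLE (Finset.le_sup (f := fun d0 : S0 => d0.1) d.2) v.1)) v.2)))
    have RamP : ∀ d ∈ Dv, ∀ i' j' : Fin d.1 → ℕ, StrictMono i' → StrictMono j' →
        (d.2.1.Realize (fun v : Fin d.1 × Fin m => H (G (i' v.1)) v.2) ↔
         d.2.1.Realize (fun v : Fin d.1 × Fin m => H (G (j' v.1)) v.2)) := by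
      intro d hd i' j' hi' hj'
      obtain ⟨I, hI, hIe⟩ := extendSM i' hi'
      obtain ⟨J, hJ, hJe⟩ := extendSM j' hj'
      have hIr : StrictMono (fun w : Fin r => I ↑w) := fun p q hpq => hI hpq
      have hJr : StrictMono (fun w : Fin r => J ↑w) := fun p q hpq => hJ hpq
      have hcol := congrFun (hGhom (fun w : Fin r => I ↑w) (fun w : Fin r => J ↑w) hIr hJr)
        ⟨d, hd⟩
      have hcol' : decide (d.2.1.Realize (fun v : Fin d.1 × Fin m =>
            H ((G ∘ fun w : Fin r => I ↑w)
              (Fin.castLE (Finset.le_sup (f := fun d0 : S0 => d0.1) hd) v.1)) v.2))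
          = decide (d.2.1.Realize (fun v : Fin d.1 × Fin m =>
            H ((G ∘ fun w : Fin r => J ↑w)
              (Fin.castLE (Finset.le_sup (f := fun d0 : S0 => d0.1) hd) v.1)) v.2)) := hcol
      have hP : (fun v : Fin d.1 × Fin m =>
            H ((G ∘ fun w : Fin r => I ↑w)
              (Fin.castLE (Finset.le_sup (f := fun d0 : S0 => d0.1) hd) v.1)) v.2)
          = fun v : Fin d.1 × Fin m => H (G (i' v.1)) v.2 := by
        funext v
        show H (G (I ↑(v.1))) v.2 = H (G (i' v.1)) v.2
        rw [hIe]
      have hQ : (fun v : Fin d.1 × Fin m =>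
            H ((G ∘ fun w : Fin r => J ↑w)
              (Fin.castLE (Finset.le_sup (f := fun d0 : S0 => d0.1) hd) v.1)) v.2)
          = fun v : Fin d.1 × Fin m => H (G (j' v.1)) v.2 := by
        funext v
        show H (G (J ↑(v.1))) v.2 = H (G (j' v.1)) v.2
        rw [hJe]
      rw [hP, hQ] at hcol'
      exact decide_eq_decide.mp hcol'
    -- ---- assembling the finite approximation ----
    let bD : ℕ := Dv.sup (fun d => (Finset.univ.sup (fun v : Fin d.1 => d.2.2.1 v)) ⊔
      (Finset.univ.sup (fun v : Fin d.1 => d.2.2.2 v)))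
    let NN : ℕ := max N₀ (bD + 1) + 1
    have hNN : 0 < NN := Nat.succ_pos _
    have hNb : bD < NN := by
      have := le_max_right N₀ (bD + 1)
      show bD < max N₀ (bD + 1) + 1
      omega
    have hN0 : N₀ ≤ NN := by
      have := le_max_left N₀ (bD + 1)
      show N₀ ≤ max N₀ (bD + 1) + 1
      omega
    have hdbound : ∀ d ∈ Dv, (∀ v : Fin d.1, d.2.2.1 v < NN) ∧
        (∀ v : Fin d.1, d.2.2.2 v < NN) := by
      intro d hd
      have h1 : ((Finset.univ.sup fun v : Fin d.1 => d.2.2.1 v) ⊔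
          (Finset.univ.sup fun v : Fin d.1 => d.2.2.2 v)) ≤ bD :=
        Finset.le_sup (f := fun d0 : S0 => (Finset.univ.sup fun v : Fin d0.1 => d0.2.2.1 v) ⊔
          (Finset.univ.sup fun v : Fin d0.1 => d0.2.2.2 v)) hd
      have h4 : bD < NN := hNb
      constructor <;> intro v
      · have h2 : d.2.2.1 v ≤ Finset.univ.sup fun v : Fin d.1 => d.2.2.1 v :=
          Finset.le_sup (Finset.mem_univ v)
        have h3 := le_trans h2 (le_trans le_sup_left h1)
        omega
      · have h2 : d.2.2.2 v ≤ Finset.univ.sup fun v : Fin d.1 => d.2.2.2 v :=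
          Finset.le_sup (Finset.mem_univ v)
        have h3 := le_trans h2 (le_trans le_sup_right h1)
        omega
    let idxS : Fin (i₀+1+NN) → ℕ :=
      fun v => if (v:ℕ) ≤ i₀ then (v:ℕ) else G ((v:ℕ) - (i₀+1)) + i₀ + 1
    have hidxS : StrictMono idxS := by
      intro b c hbc
      have hb2 := b.isLt
      have hc2 := c.isLt
      have hbc' : (b:ℕ) < (c:ℕ) := hbc
      show (if (b:ℕ) ≤ i₀ then (b:ℕ) else G ((b:ℕ)-(i₀+1)) + i₀+1)
        < (if (c:ℕ) ≤ i₀ then (c:ℕ) else G ((c:ℕ)-(i₀+1)) + i₀+1)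
      split_ifs with h h' h'
      · omega
      · omega
      · omega
      · have := hGmono (show (b:ℕ)-(i₀+1) < (c:ℕ)-(i₀+1) by omega)
        omega
    have baseS : (Ξ NN hNN Dv).Realize (fun v : Fin (i₀+1+NN) × Fin 1 => a (idxS v.1)) := by
      rw [EX NN hNN Dv idxS]
      refine ⟨fun n => H (G ↑n), fun n t => hHB _ t, ?_, ?_⟩
      · intro n
        rw [VLrw (H (G ↑n)) _ (a (G ↑n + i₀ + 1)) _ ?_ ?_]
        · exact hHΘ (G ↑n)
        · show a (if (i₀+1+(n:ℕ):ℕ) ≤ i₀ then (i₀+1+(n:ℕ):ℕ)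
            else G ((i₀+1+(n:ℕ):ℕ)-(i₀+1))+i₀+1) = a (G ↑n + i₀ + 1)
          rw [if_neg (by omega)]
          rw [show (i₀+1+(n:ℕ)) - (i₀+1) = (n:ℕ) from by omega]
        · intro j
          have hj := j.isLt
          show (if ((j:ℕ):ℕ) ≤ i₀ then ((j:ℕ):ℕ) else _) = (j:ℕ)
          rw [if_pos (by omega)]
      · intro d hd
        obtain ⟨-, hfil1, hfil2⟩ := Finset.mem_filter.mp hd
        have hb := hdbound d hd
        have hiff := RamP d hd d.2.2.1 d.2.2.2 hfil1 hfil2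
        convert hiff using 2
        · funext v
          show H (G ↑(ntf NN hNN (d.2.2.1 v.1))) v.2 = H (G (d.2.2.1 v.1)) v.2
          rw [show (↑(ntf NN hNN (d.2.2.1 v.1)) : ℕ) = d.2.2.1 v.1 from
            Nat.mod_eq_of_lt (hb.1 v.1)]
        · funext v
          show H (G ↑(ntf NN hNN (d.2.2.2 v.1))) v.2 = H (G (d.2.2.2 v.1)) v.2
          rw [show (↑(ntf NN hNN (d.2.2.2 v.1)) : ℕ) = d.2.2.2 v.1 from
            Nat.mod_eq_of_lt (hb.2 v.1)]
    have transS := ha (i₀+1+NN) (Ξ NN hNN Dv) idxS (fun v => (v:ℕ)) hidxS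
      (fun p q h => h)
    have baseId : (Ξ NN hNN Dv).Realize (fun v : Fin (i₀+1+NN) × Fin 1 => a ((v.1:ℕ))) :=
      transS.mp baseS
    obtain ⟨g'', hB'', hθ'', hD''⟩ := (EX NN hNN Dv (fun v => (v:ℕ))).mp baseId
    refine ⟨fun p => if h : p.1 < NN then g'' ⟨p.1, h⟩ p.2 else a 0, ?_, ?_, ?_⟩
    · intro p hp
      have hlt : p.1 < NN := by omega
      show (if h : p.1 < NN then g'' ⟨p.1, h⟩ p.2 else a 0) ∈ B
      rw [dif_pos hlt]
      exact hB'' _ _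
    · intro n hn
      have hlt : n < NN := by omega
      show Formula.Realize θf (VL (fun t => if h : n < NN then g'' ⟨n, h⟩ t else a 0)
        (a (n+i₀+1)))
      rw [show (fun t : Fin m => if h : n < NN then g'' ⟨n, h⟩ t else a 0) = g'' ⟨n, hlt⟩
        from funext fun t => dif_pos hlt]
      have h5 := hθ'' ⟨n, hlt⟩
      rw [VLrw _ _ (a (n+i₀+1)) _ ?_ ?_] at h5
      · exact h5
      · show a (i₀+1+n) = a (n+i₀+1)
        rw [show i₀+1+n = n+i₀+1 from by omega]
      · intro j
        rfl
    · intro d hd hm1 hm2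
      have hdv : d ∈ Dv := Finset.mem_filter.mpr ⟨hd, hm1, hm2⟩
      have h6 := hD'' d hdv
      have hb := hdbound d hdv
      convert h6 using 2
      · funext v
        show (if h : d.2.2.1 v.1 < NN then g'' ⟨d.2.2.1 v.1, h⟩ v.2 else a 0)
          = g'' (ntf NN hNN (d.2.2.1 v.1)) v.2
        rw [dif_pos (hb.1 v.1)]
        congr 1
        exact (Fin.ext (Nat.mod_eq_of_lt (hb.1 v.1))).symm
      · funext v
        show (if h : d.2.2.2 v.1 < NN then g'' ⟨d.2.2.2 v.1, h⟩ v.2 else a 0)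
          = g'' (ntf NN hNN (d.2.2.2 v.1)) v.2
        rw [dif_pos (hb.2 v.1)]
        congr 1
        exact (Fin.ext (Nat.mod_eq_of_lt (hb.2 v.1))).symm
  -- ============ the full type and saturation ============
  let UA : ℕ × Fin m → (LU L).Formula ((ℕ × Fin m) ⊕ ↥A) := fun p =>
    Relations.formula (L := LU L) (n := 1) (Sum.inr PUnit.unit) ![Term.var (Sum.inl p)]
  let ρA : ℕ → ((Fin m ⊕ Fin 1) ⊕ Fin (i₀+1)) → ((ℕ × Fin m) ⊕ ↥A) := fun n =>
    Sum.elim (Sum.elim (fun t => Sum.inl (n, t)) (fun _ => Sum.inr ⟨a (n+i₀+1), aA _⟩))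
      (fun j => Sum.inr ⟨a ↑j, aA _⟩)
  let θA : ℕ → (LU L).Formula ((ℕ × Fin m) ⊕ ↥A) := fun n => Formula.relabel (ρA n) θLU
  let ψA : S0 → (LU L).Formula ((ℕ × Fin m) ⊕ ↥A) := fun d =>
    (Formula.relabel (fun v : Fin d.1 × Fin m =>
      (Sum.inl (d.2.2.1 v.1, v.2) : (ℕ × Fin m) ⊕ ↥A)) d.2.1).iff
    (Formula.relabel (fun v : Fin d.1 × Fin m =>
      (Sum.inl (d.2.2.2 v.1, v.2) : (ℕ × Fin m) ⊕ ↥A)) d.2.1)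
  let SigS : Set ((LU L).Formula ((ℕ × Fin m) ⊕ ↥A)) :=
    (Set.range UA ∪ Set.range θA) ∪
      {F | ∃ d : S0, StrictMono d.2.2.1 ∧ StrictMono d.2.2.2 ∧ F = ψA d}
  have PER : ∀ F ∈ SigS, ∃ (N : ℕ) (D : Finset S0), ∀ v : (ℕ × Fin m) → M,
      Good N D v → F.Realize (Sum.elim v (Subtype.val : ↥A → M)) := by
    intro F hF
    rcases hF with (hF | hF) | hF
    · obtain ⟨p, rfl⟩ := hF
      exact ⟨p.1 + 1, ∅, fun v hv => (hUreal _ _ _).mpr (hv.1 p (Nat.lt_succ_self _))⟩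
    · obtain ⟨n, rfl⟩ := hF
      refine ⟨n+1, ∅, fun v hv => ?_⟩
      show (Formula.relabel (ρA n) θLU).Realize _
      rw [Formula.realize_relabel, hθLU]
      have e : (Sum.elim v (Subtype.val : ↥A → M)) ∘ (ρA n)
          = VL (fun t => v (n, t)) (a (n+i₀+1)) := by
        funext b
        rcases b with (t | k) | j <;> rfl
      rw [e]
      exact hv.2.1 n (Nat.lt_succ_self n)
    · obtain ⟨d, hm1, hm2, rfl⟩ := hF
      refine ⟨0, {d}, fun v hv => ?_⟩
      show ((Formula.relabel _ d.2.1).iff (Formula.relabel _ d.2.1)).Realize _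
      rw [Formula.realize_iff, Formula.realize_relabel, Formula.realize_relabel]
      exact hv.2.2 d (Finset.mem_singleton_self d) hm1 hm2
  have GoodMono : ∀ (N N' : ℕ) (D D' : Finset S0) (v : (ℕ × Fin m) → M),
      Good N D v → N' ≤ N → D' ⊆ D → Good N' D' v := by
    rintro N N' D D' v ⟨h1, h2, h3⟩ hN hD
    exact ⟨fun p hp => h1 p (lt_of_lt_of_le hp hN), fun n hn => h2 n (lt_of_lt_of_le hn hN),
      fun d hd => h3 d (hD hd)⟩
  have FRAG : ∀ fs : Finset ((LU L).Formula ((ℕ × Fin m) ⊕ ↥A)), ↑fs ⊆ SigS →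
      ∃ (N : ℕ) (D : Finset S0), ∀ v, Good N D v →
        ∀ F ∈ fs, F.Realize (Sum.elim v (Subtype.val : ↥A → M)) := by
    intro fs
    induction fs using Finset.induction_on with
    | empty => exact fun _ => ⟨0, ∅, fun v _ F hF => absurd hF (Finset.notMem_empty F)⟩
    | @insert F fs hFn ih =>
      intro hsub
      obtain ⟨N1, D1, h1⟩ := PER F (hsub (Finset.mem_insert_self F fs))
      obtain ⟨N2, D2, h2⟩ := ih (fun x hx =>
        hsub (Finset.mem_insert_of_mem (by exact_mod_cast hx)))
      refine ⟨max N1 N2, D1 ∪ D2, fun v hv F' hF' => ?_⟩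
      rcases Finset.mem_insert.mp hF' with rfl | hF'
      · exact h1 v (GoodMono _ _ _ _ v hv (le_max_left _ _) Finset.subset_union_left)
      · exact h2 v (GoodMono _ _ _ _ v hv (le_max_right _ _) Finset.subset_union_right) F' hF'
  have hαcard : #(ℕ × Fin m) < κ := lt_of_le_of_lt Cardinal.mk_le_aleph0 hκ0
  have hAcard : #(↥A) < κ := by
    have hco : (Set.range a).Countable := Set.countable_range a
    haveI := hco.to_subtype
    exact lt_of_le_of_lt Cardinal.mk_le_aleph0 hκ0
  obtain ⟨v, hv⟩ := hsat (ℕ × Fin m) hαcard A hAcard SigS (by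
    intro fs hfs
    obtain ⟨N, D, hND⟩ := FRAG fs hfs
    obtain ⟨v, hvG⟩ := KEY N D
    exact ⟨v, hND v hvG⟩)
  -- ============ conclusion ============
  refine ⟨m, f, ⟨LHom.sumInl.onFormula φgraph, ?_⟩, (fun n t => v (n, t)), ?_, ?_⟩
  · intro x y
    exact (hgraphiff x y).trans
      (@LHom.realize_onFormula L (LU L) M _ _ _ LHom.sumInl hexp φgraph _).symm
  · intro k ψ ii jj hii hjj
    have hmem : ψA ⟨k, ψ, ii, jj⟩ ∈ SigS := Or.inr ⟨⟨k, ψ, ii, jj⟩, hii, hjj, rfl⟩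
    have h7 := hv _ hmem
    rw [show ψA ⟨k, ψ, ii, jj⟩
        = (Formula.relabel (fun v' : Fin k × Fin m =>
            (Sum.inl (ii v'.1, v'.2) : (ℕ × Fin m) ⊕ ↥A)) ψ).iff
          (Formula.relabel (fun v' : Fin k × Fin m =>
            (Sum.inl (jj v'.1, v'.2) : (ℕ × Fin m) ⊕ ↥A)) ψ) from rfl] at h7
    rw [Formula.realize_iff, Formula.realize_relabel, Formula.realize_relabel] at h7
    exact h7
  · intro i'
    constructor
    · intro t
      have h8 := hv _ (Or.inl (Or.inl ⟨(i', t), rfl⟩))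
      exact (hUreal _ _ _).mp h8
    · have h9 := hv _ (Or.inl (Or.inr ⟨i', rfl⟩))
      rw [show θA i' = Formula.relabel (ρA i') θLU from rfl] at h9
      rw [Formula.realize_relabel, hθLU] at h9
      have e : (Sum.elim v (Subtype.val : ↥A → M)) ∘ (ρA i')
          = VL (fun t => v (i', t)) (a (i'+i₀+1)) := by
        funext b
        rcases b with (t | k) | j <;> rfl
      rw [e] at h9
      exact hfeq _ _ h9

end PaperDep
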